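/- Let α, β ∈ ℝ satisfy 4β < α < 0. Then the ℤ-action generated by Γ_{α,β} on M \ {0} is cocompact: there exists a compact set K ⊆ M \ {0} such that for every p ∈ M \ {0} there is an integer n ∈ ℤ with Γ_{α,β}^n(p) ∈ K. Consequently the quotient of M \ {0} by this ℤ-action is a compact topological space. -/

import Mathlib

open ComplexConjugate

/-- `r(w,z₁,z₂,z₃,z₄) = Im w − (z₁ conj z₂ + z₂ conj z₁ + z₃ conj z₄ + z₄ conj z₃) − |z₁|⁴`. -/
noncomputable def rdef : ℂ × ℂ × ℂ × ℂ × ℂ → ℝ := fun p =>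
  p.1.im
    - (p.2.1 * conj p.2.2.1 + p.2.2.1 * conj p.2.1
        + p.2.2.2.1 * conj p.2.2.2.2 + p.2.2.2.2 * conj p.2.2.2.1).re
    - ‖p.2.1‖ ^ 4

/-- `M = r⁻¹(0)`. -/
noncomputable def Mdef : Set (ℂ × ℂ × ℂ × ℂ × ℂ) := rdef ⁻¹' {0}

/-- `Γ_{α,β}(w,z₁,z₂,z₃,z₄) = (e^{4β}w, e^{β}z₁, e^{3β}z₂, e^{4β−α}z₃, e^{α}z₄)`. -/
noncomputable def Γdef (α β : ℝ) : ℂ × ℂ × ℂ × ℂ × ℂ → ℂ × ℂ × ℂ × ℂ × ℂ := fun p =>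
  ((Real.exp (4 * β) : ℂ) * p.1, (Real.exp β : ℂ) * p.2.1,
    (Real.exp (3 * β) : ℂ) * p.2.2.1, (Real.exp (4 * β - α) : ℂ) * p.2.2.2.1,
    (Real.exp α : ℂ) * p.2.2.2.2)

lemma sup_bound {a b x y X Y : ℝ} (ha : 0 ≤ a) (hb : 0 ≤ b)
    (h1 : a * x ≤ X) (h2 : X ≤ b * x) (h3 : a * y ≤ Y) (h4 : Y ≤ b * y) :
    a * max x y ≤ max X Y ∧ max X Y ≤ b * max x y := by
  rw [mul_max_of_nonneg _ _ ha, mul_max_of_nonneg _ _ hb]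
  exact ⟨max_le_max h1 h3, max_le_max h2 h4⟩

lemma scale_bound {a b t : ℝ} (hat : a ≤ Real.exp t) (htb : Real.exp t ≤ b) (z : ℂ) :
    a * ‖z‖ ≤ ‖(Real.exp t : ℂ) * z‖ ∧ ‖(Real.exp t : ℂ) * z‖ ≤ b * ‖z‖ := by
  rw [norm_mul, Complex.norm_real, Real.norm_eq_abs, abs_of_pos (Real.exp_pos t)]
  constructor <;> apply mul_le_mul_of_nonneg_right <;> first | assumption | positivity

lemma rGamma (α β : ℝ) (p : ℂ × ℂ × ℂ × ℂ × ℂ) :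
    rdef (Γdef α β p) = Real.exp (4 * β) * rdef p := by
  obtain ⟨w, z1, z2, z3, z4⟩ := p
  simp only [rdef, Γdef, map_mul, Complex.conj_ofReal, map_pow, norm_mul, Complex.norm_real, Real.norm_eq_abs,
    Complex.mul_im, Complex.ofReal_im, Complex.ofReal_re, Complex.add_re, Complex.mul_re]
  rw [abs_of_pos (Real.exp_pos β)]
  have h3 : Real.exp β * Real.exp (3 * β) = Real.exp (4 * β) := by
    rw [← Real.exp_add]; ring_nf
  have h4 : Real.exp (4 * β - α) * Real.exp α = Real.exp (4 * β) := by
    rw [← Real.exp_add]; ring_nf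
  have h5 : Real.exp β ^ 4 = Real.exp (4 * β) := by
    rw [← Real.exp_nat_mul]; ring_nf
  linear_combination (-(z1.re * ((starRingEnd ℂ) z2).re - z1.im * ((starRingEnd ℂ) z2).im
      + z2.re * ((starRingEnd ℂ) z1).re - z2.im * ((starRingEnd ℂ) z1).im)) * h3
    + (-(z3.re * ((starRingEnd ℂ) z4).re - z3.im * ((starRingEnd ℂ) z4).im
      + z4.re * ((starRingEnd ℂ) z3).re - z4.im * ((starRingEnd ℂ) z3).im)) * h4
    + (-(‖z1‖ ^ 4)) * h5

lemma gamma_zero_iff (α β : ℝ) (p : ℂ × ℂ × ℂ × ℂ × ℂ) :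
    Γdef α β p = 0 ↔ p = 0 := by
  obtain ⟨w, z1, z2, z3, z4⟩ := p
  simp [Γdef, Prod.ext_iff, mul_eq_zero, Complex.ofReal_eq_zero, Real.exp_ne_zero]

lemma rdef_continuous : Continuous rdef := by
  unfold rdef
  fun_prop


/-- If `4β < α < 0`, the `ℤ`-action generated by `Γ_{α,β}` on `M \ {0}` is
cocompact: some compact `K ⊆ M \ {0}` meets every orbit.  Consequently the
quotient of `M \ {0}` by this `ℤ`-action (the quotient by the setoid `s` whose
relation identifies points on the same `Γ_{α,β}`-orbit) is compact. -/
theorem stmt_6 (α β : ℝ) (h1 : 4 * β < α) (h2 : α < 0)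
    (Γ : Equiv.Perm (ℂ × ℂ × ℂ × ℂ × ℂ))
    (hΓ : ∀ p, Γ p = Γdef α β p)
    (s : Setoid {p : ℂ × ℂ × ℂ × ℂ × ℂ // p ∈ Mdef \ {0}})
    (hs : ∀ x y : {p : ℂ × ℂ × ℂ × ℂ × ℂ // p ∈ Mdef \ {0}},
      s.r x y ↔ ∃ n : ℤ, (Γ ^ n) x.val = y.val) :
    (∃ K : Set (ℂ × ℂ × ℂ × ℂ × ℂ), IsCompact K ∧ K ⊆ Mdef \ {0} ∧
        ∀ p ∈ Mdef \ {0}, ∃ n : ℤ, (Γ ^ n) p ∈ K) ∧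
      CompactSpace (Quotient s) := by
  classical
  have hβ : β < 0 := by linarith
  set a : ℝ := Real.exp (4 * β) with ha_def
  set b : ℝ := max (Real.exp β) (max (Real.exp α) (Real.exp (4 * β - α))) with hb_def
  have ha0 : 0 < a := Real.exp_pos _
  have hb0 : 0 < b := lt_of_lt_of_le (Real.exp_pos β) (le_max_left _ _)
  have hb1 : b < 1 := by
    apply max_lt (Real.exp_lt_one_iff.2 hβ)
    exact max_lt (Real.exp_lt_one_iff.2 h2) (Real.exp_lt_one_iff.2 (by linarith))
  -- basic bounds for the five scaling factors
  have e1 : a ≤ Real.exp (4 * β) ∧ Real.exp (4 * β) ≤ b := by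
    refine ⟨le_refl _, le_trans (Real.exp_le_exp.2 (by linarith)) (le_max_left _ _)⟩
  have e2 : a ≤ Real.exp β ∧ Real.exp β ≤ b :=
    ⟨Real.exp_le_exp.2 (by linarith), le_max_left _ _⟩
  have e3 : a ≤ Real.exp (3 * β) ∧ Real.exp (3 * β) ≤ b :=
    ⟨Real.exp_le_exp.2 (by linarith),
      le_trans (Real.exp_le_exp.2 (by linarith)) (le_max_left _ _)⟩
  have e4 : a ≤ Real.exp (4 * β - α) ∧ Real.exp (4 * β - α) ≤ b :=
    ⟨Real.exp_le_exp.2 (by linarith), le_trans (le_max_right _ _) (le_max_right _ _)⟩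
  have e5 : a ≤ Real.exp α ∧ Real.exp α ≤ b :=
    ⟨Real.exp_le_exp.2 (by linarith), le_trans (le_max_left _ _) (le_max_right _ _)⟩
  -- the norm bounds for one application of Γ
  have key : ∀ p : ℂ × ℂ × ℂ × ℂ × ℂ, a * ‖p‖ ≤ ‖Γ p‖ ∧ ‖Γ p‖ ≤ b * ‖p‖ := by
    intro p
    rw [hΓ p]
    obtain ⟨w, z1, z2, z3, z4⟩ := p
    have c1 := scale_bound e1.1 e1.2 w
    have c2 := scale_bound e2.1 e2.2 z1
    have c3 := scale_bound e3.1 e3.2 z2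
    have c4 := scale_bound e4.1 e4.2 z3
    have c5 := scale_bound e5.1 e5.2 z4
    have s45 := sup_bound ha0.le hb0.le c4.1 c4.2 c5.1 c5.2
    have s345 := sup_bound ha0.le hb0.le c3.1 c3.2 s45.1 s45.2
    have s2345 := sup_bound ha0.le hb0.le c2.1 c2.2 s345.1 s345.2
    have sall := sup_bound ha0.le hb0.le c1.1 c1.2 s2345.1 s2345.2
    simpa [Γdef, Prod.norm_def] using sall
  -- Γ and its inverse preserve M \ {0}
  have step : ∀ q, q ∈ Mdef \ {0} → Γ q ∈ Mdef \ {0} := by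
    rintro q ⟨hqM, hq0⟩
    refine ⟨?_, ?_⟩
    · have := rGamma α β q
      simp only [Mdef, Set.mem_preimage, Set.mem_singleton_iff] at hqM ⊢
      rw [hΓ, this, hqM, mul_zero]
    · simp only [Set.mem_singleton_iff] at hq0 ⊢
      rw [hΓ]
      exact fun h => hq0 ((gamma_zero_iff α β q).1 h)
  have step' : ∀ q, q ∈ Mdef \ {0} → Γ.symm q ∈ Mdef \ {0} := by
    rintro q ⟨hqM, hq0⟩
    have hΓq : Γ (Γ.symm q) = q := Γ.apply_symm_apply q
    refine ⟨?_, ?_⟩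
    · have := rGamma α β (Γ.symm q)
      rw [← hΓ, hΓq] at this
      simp only [Mdef, Set.mem_preimage, Set.mem_singleton_iff] at hqM ⊢
      have := this.symm.trans hqM
      have hne := (Real.exp_pos (4 * β)).ne'
      exact (mul_eq_zero.1 this).resolve_left hne
    · simp only [Set.mem_singleton_iff] at hq0 ⊢
      intro h
      apply hq0
      have h0 : Γ 0 = 0 := by rw [hΓ]; exact (gamma_zero_iff α β 0).2 rfl
      rw [← hΓq, h, h0]
  have hΓz : ∀ (n : ℤ) (p), p ∈ Mdef \ {0} → (Γ ^ n) p ∈ Mdef \ {0} := by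
    intro n
    induction n using Int.induction_on with
    | zero => intro p hp; simpa using hp
    | succ k ih =>
      intro p hp
      rw [zpow_add_one, Equiv.Perm.mul_apply]
      exact ih _ (step p hp)
    | pred k ih =>
      intro p hp
      rw [zpow_sub_one, Equiv.Perm.mul_apply, Equiv.Perm.inv_def]
      exact ih _ (step' p hp)
  -- iterated norm bounds
  have hup : ∀ (n : ℕ) (p : ℂ × ℂ × ℂ × ℂ × ℂ), ‖(Γ ^ (n : ℤ)) p‖ ≤ b ^ n * ‖p‖ := by
    intro n
    induction n with
    | zero => intro p; simp
    | succ k ih =>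
      intro p
      have : ((k : ℤ) + 1) = ((k + 1 : ℕ) : ℤ) := by push_cast; ring
      rw [← this, zpow_add_one, Equiv.Perm.mul_apply]
      calc ‖(Γ ^ (k : ℤ)) (Γ p)‖ ≤ b ^ k * ‖Γ p‖ := ih (Γ p)
        _ ≤ b ^ k * (b * ‖p‖) :=
          mul_le_mul_of_nonneg_left (key p).2 (pow_nonneg hb0.le k)
        _ = b ^ (k + 1) * ‖p‖ := by ring
  have hdown : ∀ (n : ℕ) (p : ℂ × ℂ × ℂ × ℂ × ℂ), ‖p‖ ≤ b ^ n * ‖(Γ ^ (-(n : ℤ))) p‖ := by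
    intro n
    induction n with
    | zero => intro p; simp
    | succ k ih =>
      intro p
      have hsplit : (Γ : Equiv.Perm (ℂ × ℂ × ℂ × ℂ × ℂ)) ^ (-(k : ℤ)) =
          Γ * Γ ^ (-((k + 1 : ℕ) : ℤ)) := by
        rw [← zpow_one_add]; congr 1; push_cast; ring
      calc ‖p‖ ≤ b ^ k * ‖(Γ ^ (-(k : ℤ))) p‖ := ih p
        _ = b ^ k * ‖Γ ((Γ ^ (-((k + 1 : ℕ) : ℤ))) p)‖ := by
          rw [hsplit, Equiv.Perm.mul_apply]
        _ ≤ b ^ k * (b * ‖(Γ ^ (-((k + 1 : ℕ) : ℤ))) p‖) :=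
          mul_le_mul_of_nonneg_left (key _).2 (pow_nonneg hb0.le k)
        _ = b ^ (k + 1) * ‖(Γ ^ (-((k + 1 : ℕ) : ℤ))) p‖ := by ring
  -- the compact set
  set K : Set (ℂ × ℂ × ℂ × ℂ × ℂ) := Mdef ∩ {q | a ≤ ‖q‖ ∧ ‖q‖ ≤ 1} with hK_def
  have hKsub : K ⊆ Mdef \ {0} := by
    rintro q ⟨hqM, hqa, hq1⟩
    refine ⟨hqM, ?_⟩
    simp only [Set.mem_singleton_iff]
    intro h
    rw [h, norm_zero] at hqa
    exact absurd hqa (not_le.2 ha0)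
  have hKclosed : IsClosed K := by
    apply IsClosed.inter ((isClosed_singleton.preimage rdef_continuous))
    have : {q : ℂ × ℂ × ℂ × ℂ × ℂ | a ≤ ‖q‖ ∧ ‖q‖ ≤ 1} = norm ⁻¹' (Set.Icc a 1) := rfl
    rw [this]
    exact isClosed_Icc.preimage continuous_norm
  have hKcompact : IsCompact K := by
    apply (isCompact_closedBall (0 : ℂ × ℂ × ℂ × ℂ × ℂ) 1).of_isClosed_subset hKclosed
    rintro q ⟨_, _, hq1⟩
    simpa [Metric.mem_closedBall, dist_eq_norm] using hq1
  -- every orbit meets K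
  have horbit : ∀ p ∈ Mdef \ {0}, ∃ n : ℤ, (Γ ^ n) p ∈ K := by
    rintro p ⟨hpM, hp0⟩
    have hp0' : p ≠ 0 := hp0
    have hpnorm : 0 < ‖p‖ := norm_pos_iff.2 hp0'
    -- the set of integers n with ‖Γ^n p‖ ≤ 1 is nonempty and bounded below
    obtain ⟨N₁, hN₁⟩ := exists_pow_lt_of_lt_one (by positivity : (0:ℝ) < 1 / ‖p‖) hb1
    obtain ⟨N₂, hN₂⟩ := exists_pow_lt_of_lt_one hpnorm hb1
    have Hinh : ∃ z : ℤ, ‖(Γ ^ z) p‖ ≤ 1 := by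
      refine ⟨(N₁ : ℤ), ?_⟩
      calc ‖(Γ ^ (N₁ : ℤ)) p‖ ≤ b ^ N₁ * ‖p‖ := hup N₁ p
        _ ≤ (1 / ‖p‖) * ‖p‖ := mul_le_mul_of_nonneg_right hN₁.le hpnorm.le
        _ = 1 := by field_simp
    have Hbdd : ∃ c : ℤ, ∀ z : ℤ, ‖(Γ ^ z) p‖ ≤ 1 → c ≤ z := by
      refine ⟨-(N₂ : ℤ), ?_⟩
      intro z hz
      by_contra hlt
      push_neg at hlt
      set k : ℕ := (-z).toNat with hk_def
      have hkz : -(k : ℤ) = z := by omega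
      have hkN : N₂ ≤ k := by omega
      have : ‖p‖ ≤ b ^ k * ‖(Γ ^ z) p‖ := by rw [← hkz]; exact hdown k p
      have hbk : b ^ k ≤ b ^ N₂ := pow_le_pow_of_le_one hb0.le hb1.le hkN
      have : ‖p‖ ≤ b ^ N₂ := by
        calc ‖p‖ ≤ b ^ k * ‖(Γ ^ z) p‖ := this
          _ ≤ b ^ k * 1 := mul_le_mul_of_nonneg_left hz (by positivity)
          _ = b ^ k := mul_one _
          _ ≤ b ^ N₂ := hbk
      linarith
    obtain ⟨n₀, hn₀, hleast⟩ := Int.exists_least_of_bdd Hbdd Hinh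
    refine ⟨n₀, (hΓz n₀ p ⟨hpM, hp0⟩).1, ?_, hn₀⟩
    -- a ≤ ‖Γ^{n₀} p‖ since ‖Γ^{n₀-1} p‖ > 1
    have hprev : 1 < ‖(Γ ^ (n₀ - 1)) p‖ := by
      by_contra h
      push_neg at h
      have := hleast _ h
      omega
    have hsplit : (Γ : Equiv.Perm (ℂ × ℂ × ℂ × ℂ × ℂ)) ^ n₀ = Γ * Γ ^ (n₀ - 1) := by
      rw [← zpow_one_add]; congr 1; ring
    calc a = a * 1 := (mul_one a).symm
      _ ≤ a * ‖(Γ ^ (n₀ - 1)) p‖ := mul_le_mul_of_nonneg_left hprev.le ha0.le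
      _ ≤ ‖Γ ((Γ ^ (n₀ - 1)) p)‖ := (key _).1
      _ = ‖(Γ ^ n₀) p‖ := by rw [hsplit, Equiv.Perm.mul_apply]
  refine ⟨⟨K, hKcompact, hKsub, horbit⟩, ?_⟩
  -- compactness of the quotient
  set K' : Set {p : ℂ × ℂ × ℂ × ℂ × ℂ // p ∈ Mdef \ {0}} := Subtype.val ⁻¹' K with hK'_def
  have hK'c : IsCompact K' := by
    rw [Topology.IsEmbedding.subtypeVal.isCompact_iff]
    rwa [Set.image_preimage_eq_of_subset (by rw [Subtype.range_coe]; exact hKsub)]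
  have himg : IsCompact (Quotient.mk s '' K') := hK'c.image continuous_quot_mk
  have huniv : Quotient.mk s '' K' = Set.univ := by
    apply Set.eq_univ_of_forall
    intro y
    obtain ⟨x, rfl⟩ := Quotient.exists_rep y
    obtain ⟨n, hn⟩ := horbit x.val x.2
    refine ⟨⟨(Γ ^ n) x.val, hΓz n x.val x.2⟩, hn, ?_⟩
    apply Quotient.sound
    refine (hs _ _).2 ⟨-n, ?_⟩
    rw [zpow_neg]
    exact Equiv.symm_apply_apply _ _
  exact ⟨huniv ▸ himg⟩
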